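/- arXiv:1208.4152 — 4 statements merged into one kernel-verified Lean document; each statement's English description precedes it below -/
import Mathlib

section
/- For a finite measure Λ on [0,1], define λ_{b,k} = ∫₀¹ x^{k-2}(1-x)^{b-k} Λ(dx) for 2 ≤ k ≤ b. Then the rates are consistent: λ_{b,k} = λ_{b+1,k} + λ_{b+1,k+1} for all 2 ≤ k ≤ b. -/
open MeasureTheory

/-- The Λ-coalescent merger rate λ_{b,k} = ∫₀¹ x^{k-2}(1-x)^{b-k} Λ(dx). -/
noncomputable def coalRate (Λ : Measure ℝ) (b k : ℕ) : ℝ :=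
  ∫ x in Set.Icc (0 : ℝ) 1, x ^ (k - 2) * (1 - x) ^ (b - k) ∂Λ

/-- Consistency of the Λ-coalescent rates: λ_{b,k} = λ_{b+1,k} + λ_{b+1,k+1}. -/
theorem lambda_consistency (Λ : Measure ℝ) [IsFiniteMeasure Λ] (b k : ℕ)
    (hk : 2 ≤ k) (hkb : k ≤ b) :
    coalRate Λ b k = coalRate Λ (b + 1) k + coalRate Λ (b + 1) (k + 1) := by
  have h1 : b + 1 - k = (b - k) + 1 := by omega
  have h2 : k + 1 - 2 = (k - 2) + 1 := by omega
  have h3 : b + 1 - (k + 1) = b - k := by omega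
  unfold coalRate
  rw [h1, h2, h3]
  have hg : IntegrableOn (fun x : ℝ => x ^ (k - 2) * (1 - x) ^ (b - k + 1))
      (Set.Icc (0:ℝ) 1) Λ :=
    (Continuous.integrableOn_Icc (by continuity))
  have hh : IntegrableOn (fun x : ℝ => x ^ (k - 2 + 1) * (1 - x) ^ (b - k))
      (Set.Icc (0:ℝ) 1) Λ :=
    (Continuous.integrableOn_Icc (by continuity))
  rw [← integral_add hg hh]
  apply integral_congr_ae
  filter_upwards with x
  ring
end

section
/- With the rates λ_{b,k} as above, define for b > m ≥ 2 the quantity γ_{b,m} = Σ_{k=2}^{b-m} (k-1) C(b,k) λ_{b,k} + Σ_{k=b-m+1}^{b} (b-m) C(b,k) λ_{b,k} when b ≥ m+2, and γ_{m+1,m} = Σ_{k=2}^{m+1} C(m+1,k) λ_{m+1,k}. Then γ_{b,m} ≤ γ_{b+1,m} for all 2 ≤ m < b. -/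
open MeasureTheory

/-- γ_{b,m}: the rate of decrease of the block counting process absorbed at m,
when there are b > m blocks.  For b = m+1 it equals the total rate
Σ_{k=2}^{m+1} C(m+1,k) λ_{m+1,k}. -/
noncomputable def gammaRate (Λ : Measure ℝ) (b m : ℕ) : ℝ :=
  if b = m + 1 then ∑ k ∈ Finset.Icc 2 b, (b.choose k : ℝ) * coalRate Λ b k
  else ∑ k ∈ Finset.Icc 2 (b - m), ((k : ℝ) - 1) * (b.choose k : ℝ) * coalRate Λ b k
    + ∑ k ∈ Finset.Icc (b - m + 1) b, ((b : ℝ) - (m : ℝ)) * (b.choose k : ℝ) * coalRate Λ b k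

/-- The weight min(k-1, b-m). -/
noncomputable def wgt (b m k : ℕ) : ℝ := min ((k : ℝ) - 1) ((b : ℝ) - (m : ℝ))

/-- The integrand of γ_{b,m}. -/
noncomputable def gfun (b m : ℕ) (x : ℝ) : ℝ :=
  ∑ k ∈ Finset.Icc 2 b, wgt b m k * (b.choose k : ℝ) * (x ^ (k - 2) * (1 - x) ^ (b - k))

lemma wgt_nonneg {b m k : ℕ} (hb : m < b) (hk : 2 ≤ k) : 0 ≤ wgt b m k := by
  have h1 : (1 : ℝ) ≤ (k : ℝ) - 1 := by
    have : (2 : ℝ) ≤ (k : ℝ) := by exact_mod_cast hk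
    linarith
  have h2 : (1 : ℝ) ≤ (b : ℝ) - (m : ℝ) := by
    have : (m : ℝ) + 1 ≤ (b : ℝ) := by exact_mod_cast hb
    linarith
  unfold wgt
  exact le_trans zero_le_one (le_min h1 h2)

lemma gamma_eq (Λ : Measure ℝ) (m b : ℕ) (hb : m < b) :
    gammaRate Λ b m = ∑ k ∈ Finset.Icc 2 b, wgt b m k * (b.choose k : ℝ) * coalRate Λ b k := by
  unfold gammaRate
  by_cases h : b = m + 1
  · rw [if_pos h]
    apply Finset.sum_congr rfl
    intro k hk
    simp only [Finset.mem_Icc] at hk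
    have hw : wgt b m k = 1 := by
      unfold wgt
      have h1 : (2 : ℝ) ≤ (k : ℝ) := by exact_mod_cast hk.1
      have h2 : (b : ℝ) = (m : ℝ) + 1 := by exact_mod_cast h
      rw [min_eq_right (by linarith)]
      linarith
    rw [hw, one_mul]
  · rw [if_neg h]
    have hbm2 : m + 2 ≤ b := by omega
    have hunion : Finset.Icc 2 b = Finset.Icc 2 (b - m) ∪ Finset.Icc (b - m + 1) b := by
      ext k
      simp only [Finset.mem_union, Finset.mem_Icc]
      omega
    have hdisj : Disjoint (Finset.Icc 2 (b - m)) (Finset.Icc (b - m + 1) b) := by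
      simp only [Finset.disjoint_left, Finset.mem_Icc]
      omega
    rw [hunion, Finset.sum_union hdisj]
    congr 1
    · apply Finset.sum_congr rfl
      intro k hk
      simp only [Finset.mem_Icc] at hk
      have hkb : (k : ℝ) ≤ (b : ℝ) - (m : ℝ) := by
        have h1 : (k : ℝ) ≤ ((b - m : ℕ) : ℝ) := by exact_mod_cast hk.2
        have h2 : ((b - m : ℕ) : ℝ) = (b : ℝ) - (m : ℝ) := by
          have : m ≤ b := le_of_lt hb
          push_cast [this]; ring
        linarith
      unfold wgt
      rw [min_eq_left (by linarith)]
    · apply Finset.sum_congr rfl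
      intro k hk
      simp only [Finset.mem_Icc] at hk
      have hkb : (b : ℝ) - (m : ℝ) ≤ (k : ℝ) - 1 := by
        have h1 : b - m + 1 ≤ k := hk.1
        have h2 : ((b - m : ℕ) : ℝ) + 1 ≤ (k : ℝ) := by exact_mod_cast h1
        have h3 : ((b - m : ℕ) : ℝ) = (b : ℝ) - (m : ℝ) := by
          have : m ≤ b := le_of_lt hb
          push_cast [this]; ring
        linarith
      unfold wgt
      rw [min_eq_right hkb]

lemma integrable_poly (Λ : Measure ℝ) [IsFiniteMeasure Λ] (i j : ℕ) :
    IntegrableOn (fun x : ℝ => x ^ i * (1 - x) ^ j) (Set.Icc 0 1) Λ := by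
  apply ContinuousOn.integrableOn_compact isCompact_Icc
  exact (Continuous.mul (continuous_pow i) ((continuous_const.sub continuous_id).pow j)).continuousOn

lemma integrable_gfun (Λ : Measure ℝ) [IsFiniteMeasure Λ] (b m : ℕ) :
    IntegrableOn (gfun b m) (Set.Icc 0 1) Λ := by
  unfold gfun
  apply MeasureTheory.integrable_finset_sum
  intro k _
  exact ((integrable_poly Λ (k - 2) (b - k)).const_mul _)

lemma gamma_int (Λ : Measure ℝ) [IsFiniteMeasure Λ] (m b : ℕ) (hb : m < b) :
    gammaRate Λ b m = ∫ x in Set.Icc (0 : ℝ) 1, gfun b m x ∂Λ := by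
  rw [gamma_eq Λ m b hb]
  unfold gfun
  rw [MeasureTheory.integral_finset_sum _
    (fun k _ => ((integrable_poly Λ (k - 2) (b - k)).const_mul (wgt b m k * (b.choose k : ℝ))))]
  apply Finset.sum_congr rfl
  intro k _
  simp only [coalRate]
  rw [MeasureTheory.integral_const_mul]

lemma wgt_mono1 {b m k : ℕ} : wgt b m k ≤ wgt (b + 1) m k := by
  unfold wgt
  apply min_le_min le_rfl
  push_cast; linarith

lemma wgt_mono2 {b m k : ℕ} : wgt b m k ≤ wgt (b + 1) m (k + 1) := by
  unfold wgt
  apply min_le_min <;> push_cast <;> linarith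

lemma pointwise (m b : ℕ) (hm : 2 ≤ m) (hb : m < b) {x : ℝ}
    (hx0 : 0 ≤ x) (hx1 : x ≤ 1) : gfun b m x ≤ gfun (b + 1) m x := by
  have hx1' : 0 ≤ 1 - x := by linarith
  have hb1 : m < b + 1 := by omega
  -- split gfun b m x
  have hS : gfun b m x
      = (∑ k ∈ Finset.Icc 2 b, wgt b m k * (b.choose k : ℝ)
          * (x ^ (k - 2) * (1 - x) ^ (b + 1 - k)))
      + ∑ k ∈ Finset.Icc 2 b, wgt b m k * (b.choose k : ℝ)
          * (x ^ (k - 1) * (1 - x) ^ (b - k)) := by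
    unfold gfun
    rw [← Finset.sum_add_distrib]
    apply Finset.sum_congr rfl
    intro k hk
    simp only [Finset.mem_Icc] at hk
    have h1 : k - 1 = (k - 2) + 1 := by omega
    have h2 : b + 1 - k = (b - k) + 1 := by omega
    rw [h1, h2, pow_succ, pow_succ]
    ring
  -- decompose gfun (b+1) m x via Pascal
  have hP : gfun (b + 1) m x
      = (∑ k ∈ Finset.Icc 2 (b + 1), wgt (b + 1) m k * (b.choose k : ℝ)
            * (x ^ (k - 2) * (1 - x) ^ (b + 1 - k)))
      + ∑ k ∈ Finset.Icc 2 (b + 1), wgt (b + 1) m k * (b.choose (k - 1) : ℝ)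
            * (x ^ (k - 2) * (1 - x) ^ (b + 1 - k)) := by
    unfold gfun
    rw [← Finset.sum_add_distrib]
    apply Finset.sum_congr rfl
    intro k hk
    simp only [Finset.mem_Icc] at hk
    have hc : ((b + 1).choose k : ℝ) = (b.choose k : ℝ) + (b.choose (k - 1) : ℝ) := by
      have hk1 : k = (k - 1) + 1 := by omega
      have hn : (b + 1).choose k = b.choose (k - 1) + b.choose k := by
        conv_lhs => rw [hk1]
        rw [Nat.choose_succ_succ]
        have e1 : (k - 1).succ = k := by omega
        rw [e1]
      rw [hn]; push_cast; ring
    rw [hc]; ring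
  -- first sum of hP: drop the zero top term
  have hPtop : (∑ k ∈ Finset.Icc 2 (b + 1), wgt (b + 1) m k * (b.choose k : ℝ)
        * (x ^ (k - 2) * (1 - x) ^ (b + 1 - k)))
      = ∑ k ∈ Finset.Icc 2 b, wgt (b + 1) m k * (b.choose k : ℝ)
        * (x ^ (k - 2) * (1 - x) ^ (b + 1 - k)) := by
    rw [Finset.sum_Icc_succ_top (by omega)]
    simp [Nat.choose_succ_self]
  -- second sum of hP: reindex
  have hQ : (∑ k ∈ Finset.Icc 2 (b + 1), wgt (b + 1) m k * (b.choose (k - 1) : ℝ)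
        * (x ^ (k - 2) * (1 - x) ^ (b + 1 - k)))
      = ∑ j ∈ Finset.Icc 1 b, wgt (b + 1) m (j + 1) * (b.choose j : ℝ)
        * (x ^ (j - 1) * (1 - x) ^ (b - j)) := by
    have hmap : Finset.Icc 2 (b + 1) = Finset.map (addRightEmbedding 1) (Finset.Icc 1 b) := by
      rw [Finset.map_add_right_Icc]
    rw [hmap, Finset.sum_map]
    apply Finset.sum_congr rfl
    intro j hj
    simp only [addRightEmbedding_apply]
    have e1 : j + 1 - 1 = j := by omega
    have e2 : j + 1 - 2 = j - 1 := by omega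
    have e3 : b + 1 - (j + 1) = b - j := by omega
    rw [e1, e2, e3]
  -- lower bound for the first sum
  have hB : (∑ k ∈ Finset.Icc 2 b, wgt b m k * (b.choose k : ℝ)
        * (x ^ (k - 2) * (1 - x) ^ (b + 1 - k)))
      ≤ ∑ k ∈ Finset.Icc 2 b, wgt (b + 1) m k * (b.choose k : ℝ)
        * (x ^ (k - 2) * (1 - x) ^ (b + 1 - k)) := by
    apply Finset.sum_le_sum
    intro k hk
    simp only [Finset.mem_Icc] at hk
    have : (0 : ℝ) ≤ (b.choose k : ℝ) * (x ^ (k - 2) * (1 - x) ^ (b + 1 - k)) := by positivity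
    have hw := wgt_mono1 (b := b) (m := m) (k := k)
    calc wgt b m k * (b.choose k : ℝ) * (x ^ (k - 2) * (1 - x) ^ (b + 1 - k))
        = wgt b m k * ((b.choose k : ℝ) * (x ^ (k - 2) * (1 - x) ^ (b + 1 - k))) := by ring
      _ ≤ wgt (b + 1) m k * ((b.choose k : ℝ) * (x ^ (k - 2) * (1 - x) ^ (b + 1 - k))) :=
          mul_le_mul_of_nonneg_right hw this
      _ = wgt (b + 1) m k * (b.choose k : ℝ) * (x ^ (k - 2) * (1 - x) ^ (b + 1 - k)) := by ring
  -- lower bound for the second sum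
  have hA : (∑ k ∈ Finset.Icc 2 b, wgt b m k * (b.choose k : ℝ)
        * (x ^ (k - 1) * (1 - x) ^ (b - k)))
      ≤ ∑ j ∈ Finset.Icc 1 b, wgt (b + 1) m (j + 1) * (b.choose j : ℝ)
        * (x ^ (j - 1) * (1 - x) ^ (b - j)) := by
    have hstep : (∑ k ∈ Finset.Icc 2 b, wgt b m k * (b.choose k : ℝ)
          * (x ^ (k - 1) * (1 - x) ^ (b - k)))
        ≤ ∑ k ∈ Finset.Icc 2 b, wgt (b + 1) m (k + 1) * (b.choose k : ℝ)
          * (x ^ (k - 1) * (1 - x) ^ (b - k)) := by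
      apply Finset.sum_le_sum
      intro k hk
      simp only [Finset.mem_Icc] at hk
      have hnn : (0 : ℝ) ≤ (b.choose k : ℝ) * (x ^ (k - 1) * (1 - x) ^ (b - k)) := by positivity
      have hw := wgt_mono2 (b := b) (m := m) (k := k)
      calc wgt b m k * (b.choose k : ℝ) * (x ^ (k - 1) * (1 - x) ^ (b - k))
          = wgt b m k * ((b.choose k : ℝ) * (x ^ (k - 1) * (1 - x) ^ (b - k))) := by ring
        _ ≤ wgt (b + 1) m (k + 1) * ((b.choose k : ℝ) * (x ^ (k - 1) * (1 - x) ^ (b - k))) :=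
            mul_le_mul_of_nonneg_right hw hnn
        _ = wgt (b + 1) m (k + 1) * (b.choose k : ℝ) * (x ^ (k - 1) * (1 - x) ^ (b - k)) := by
            ring
    refine le_trans hstep ?_
    apply Finset.sum_le_sum_of_subset_of_nonneg (Finset.Icc_subset_Icc (by omega) le_rfl)
    intro j hj _
    simp only [Finset.mem_Icc] at hj
    have hwnn : 0 ≤ wgt (b + 1) m (j + 1) := wgt_nonneg hb1 (by omega)
    positivity
  rw [hS, hP, hPtop, hQ]
  exact add_le_add hB hA

/-- Monotonicity of the decrease rates: γ_{b,m} ≤ γ_{b+1,m} for all 2 ≤ m < b. -/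
theorem gammaRate_mono (Λ : Measure ℝ) [IsFiniteMeasure Λ] (m b : ℕ)
    (hm : 2 ≤ m) (hb : m < b) :
    gammaRate Λ b m ≤ gammaRate Λ (b + 1) m := by
  rw [gamma_int Λ m b hb, gamma_int Λ m (b + 1) (by omega)]
  apply MeasureTheory.setIntegral_mono_on (integrable_gfun Λ b m) (integrable_gfun Λ (b + 1) m)
    measurableSet_Icc
  intro x hx
  exact pointwise m b hm hb hx.1 hx.2
end

section
/- Under the (c,ε,γ)-property, λ_n ≥ C(n,2) c ε^{1−γ} B(1−γ, n−1) for all n ≥ 2, where B is the Beta function; equivalently λ_n ≥ (c ε^{1−γ} n / 2) · (n−1)! Γ(1−γ) / Γ(n−γ). -/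
open MeasureTheory

/-- The total coalescence rate λ_n = Σ_{k=2}^{n} C(n,k) λ_{n,k}. -/
noncomputable def totalRate (Λ : Measure ℝ) (n : ℕ) : ℝ :=
  ∑ k ∈ Finset.Icc 2 n, (n.choose k : ℝ) * coalRate Λ n k

lemma realBeta {a b : ℝ} (ha : 0 < a) (hb : 0 < b) :
    ∫ x in (0:ℝ)..1, x ^ (a-1) * (1-x) ^ (b-1) =
      Real.Gamma a * Real.Gamma b / Real.Gamma (a+b) := by
  have hG := Complex.Gamma_mul_Gamma_eq_betaIntegral (s := (a:ℂ)) (t := (b:ℂ))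
    (by simpa using ha) (by simpa using hb)
  have hbeta : Complex.betaIntegral (a:ℂ) (b:ℂ)
      = ((∫ x in (0:ℝ)..1, x ^ (a-1) * (1-x) ^ (b-1) : ℝ) : ℂ) := by
    rw [Complex.betaIntegral, ← intervalIntegral.integral_ofReal]
    refine intervalIntegral.integral_congr fun x hx => ?_
    rw [Set.uIcc_of_le (by norm_num : (0:ℝ) ≤ 1)] at hx
    rw [Complex.ofReal_mul, Complex.ofReal_cpow hx.1 (a-1),
      Complex.ofReal_cpow (by linarith [hx.2] : (0:ℝ) ≤ 1 - x) (b-1)]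
    push_cast
    ring_nf
  have hGne : Real.Gamma (a+b) ≠ 0 := (Real.Gamma_pos_of_pos (by linarith)).ne'
  have h2 : (Real.Gamma a * Real.Gamma b : ℝ) =
      Real.Gamma (a+b) * ∫ x in (0:ℝ)..1, x ^ (a-1) * (1-x) ^ (b-1) := by
    have := hG
    rw [hbeta, ← Complex.ofReal_add, Complex.Gamma_ofReal, Complex.Gamma_ofReal,
      Complex.Gamma_ofReal, ← Complex.ofReal_mul, ← Complex.ofReal_mul] at this
    exact_mod_cast this
  field_simp
  linarith [h2]

lemma subst_bound {ε γ : ℝ} (h0 : 0 < ε) (h1 : ε < 1) (hg1 : γ < 1) (m : ℕ) :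
    ε ^ (1-γ) * ∫ y in (0:ℝ)..1, y ^ (-γ) * (1-y) ^ m
      ≤ ∫ x in (0:ℝ)..ε, x ^ (-γ) * (1-x) ^ m := by
  have hrpow : IntervalIntegrable (fun y : ℝ => y ^ (-γ)) volume 0 1 :=
    intervalIntegral.intervalIntegrable_rpow' (by linarith)
  have hint1 : IntervalIntegrable (fun y : ℝ => y ^ (-γ) * (1-y) ^ m) volume 0 1 :=
    hrpow.mul_continuousOn (Continuous.continuousOn (by continuity))
  have hint2 : IntervalIntegrable (fun y : ℝ => y ^ (-γ) * (1-ε*y) ^ m) volume 0 1 :=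
    hrpow.mul_continuousOn (Continuous.continuousOn (by continuity))
  have hmono : ∫ y in (0:ℝ)..1, y ^ (-γ) * (1-y) ^ m
      ≤ ∫ y in (0:ℝ)..1, y ^ (-γ) * (1-ε*y) ^ m := by
    refine intervalIntegral.integral_mono_on (by norm_num) hint1 hint2 fun y hy => ?_
    refine mul_le_mul_of_nonneg_left ?_ (Real.rpow_nonneg hy.1 _)
    refine pow_le_pow_left₀ (by nlinarith [hy.2]) (by nlinarith [hy.1]) m
  have hcongr : ∫ y in (0:ℝ)..1, ε ^ (1-γ) * (y ^ (-γ) * (1-ε*y) ^ m)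
      = ∫ y in (0:ℝ)..1, ε * ((ε*y) ^ (-γ) * (1-ε*y) ^ m) := by
    refine intervalIntegral.integral_congr fun y hy => ?_
    rw [Set.uIcc_of_le (by norm_num : (0:ℝ) ≤ 1)] at hy
    rw [Real.mul_rpow h0.le hy.1]
    have : ε * ε ^ (-γ) = ε ^ (1-γ) := by
      rw [show (1:ℝ)-γ = 1 + -γ by ring, Real.rpow_add h0, Real.rpow_one]
    rw [← this]; ring
  have hsmul : ε • ∫ y in (0:ℝ)..1, (ε*y) ^ (-γ) * (1-ε*y) ^ m
      = ∫ x in (0:ℝ)..ε, x ^ (-γ) * (1-x) ^ m := by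
    have := intervalIntegral.smul_integral_comp_mul_left (a := (0:ℝ)) (b := 1)
      (fun x : ℝ => x ^ (-γ) * (1-x) ^ m) ε
    simpa using this
  calc ε ^ (1-γ) * ∫ y in (0:ℝ)..1, y ^ (-γ) * (1-y) ^ m
      ≤ ε ^ (1-γ) * ∫ y in (0:ℝ)..1, y ^ (-γ) * (1-ε*y) ^ m :=
        mul_le_mul_of_nonneg_left hmono (Real.rpow_nonneg h0.le _)
    _ = ∫ y in (0:ℝ)..1, ε ^ (1-γ) * (y ^ (-γ) * (1-ε*y) ^ m) :=
        (intervalIntegral.integral_const_mul _ _).symm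
    _ = ∫ y in (0:ℝ)..1, ε * ((ε*y) ^ (-γ) * (1-ε*y) ^ m) := hcongr
    _ = ε • ∫ y in (0:ℝ)..1, (ε*y) ^ (-γ) * (1-ε*y) ^ m :=
        intervalIntegral.integral_const_mul _ _
    _ = ∫ x in (0:ℝ)..ε, x ^ (-γ) * (1-x) ^ m := hsmul

lemma coalRate_lb (Λ : Measure ℝ) [IsFiniteMeasure Λ]
    (c ε γ : ℝ) (hc : 0 < c) (h0 : 0 < ε) (h1 : ε < 1) (hγ : γ ∈ Set.Ioo (0 : ℝ) 1)
    (hΛ : ∀ s : Set ℝ, MeasurableSet s → s ⊆ Set.Icc 0 ε →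
      ENNReal.ofReal (∫ x in s, c * x ^ (-γ)) ≤ Λ s) (n : ℕ) :
    c * ∫ x in (0:ℝ)..ε, x ^ (-γ) * (1-x) ^ (n-2) ≤ coalRate Λ n 2 := by
  set m := n - 2 with hm
  set f : ℝ → ℝ := fun x => (1-x) ^ m with hf
  have hfc : Continuous f := by fun_prop
  have hB : coalRate Λ n 2 = ∫ x in Set.Icc (0:ℝ) 1, f x ∂Λ := by
    simp [coalRate, hf, hm]
  have hfint1 : IntegrableOn f (Set.Icc (0:ℝ) 1) Λ :=
    hfc.continuousOn.integrableOn_compact isCompact_Icc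
  have hfnn : ∀ t : Set ℝ, t ⊆ Set.Icc (0:ℝ) 1 → MeasurableSet t → 0 ≤ᵐ[Λ.restrict t] f := by
    intro t ht hmt
    refine (ae_restrict_iff' hmt).mpr (ae_of_all _ fun x hx => ?_)
    exact pow_nonneg (by linarith [(ht hx).2]) m
  have hsubIcc : Set.Icc (0:ℝ) ε ⊆ Set.Icc 0 1 := Set.Icc_subset_Icc_right h1.le
  have hCε : ∫ x in Set.Icc (0:ℝ) ε, f x ∂Λ ≤ ∫ x in Set.Icc (0:ℝ) 1, f x ∂Λ :=
    setIntegral_mono_set hfint1 (hfnn _ le_rfl measurableSet_Icc) hsubIcc.eventuallyLE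
  set gnn : ℝ → NNReal := fun x => (c * x ^ (-γ)).toNNReal with hgnn
  have hgmeas : Measurable gnn := by fun_prop
  set μ : Measure ℝ := (volume.restrict (Set.Icc (0:ℝ) ε)).withDensity (fun x => (gnn x : ENNReal))
    with hμ
  have hden_int : IntegrableOn (fun x : ℝ => c * x ^ (-γ)) (Set.Icc (0:ℝ) ε) volume := by
    rw [integrableOn_Icc_iff_integrableOn_Ioc]
    have h := intervalIntegral.intervalIntegrable_rpow' (a := 0) (b := ε)
      (by linarith [hγ.2] : (-1:ℝ) < -γ)
    rw [intervalIntegrable_iff_integrableOn_Ioc_of_le h0.le] at h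
    exact h.const_mul c
  have hμΛ : μ ≤ Λ.restrict (Set.Icc (0:ℝ) ε) := by
    refine Measure.le_iff.mpr fun s hs => ?_
    rw [Measure.restrict_apply hs, hμ, withDensity_apply _ hs, Measure.restrict_restrict hs]
    have hsub : s ∩ Set.Icc 0 ε ⊆ Set.Icc 0 ε := Set.inter_subset_right
    have hms : MeasurableSet (s ∩ Set.Icc (0:ℝ) ε) := hs.inter measurableSet_Icc
    have hnn : 0 ≤ᵐ[volume.restrict (s ∩ Set.Icc (0:ℝ) ε)] fun x : ℝ => c * x ^ (-γ) := by
      refine (ae_restrict_iff' hms).mpr (ae_of_all _ fun x hx => ?_)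
      exact mul_nonneg hc.le (Real.rpow_nonneg (hsub hx).1 _)
    calc ∫⁻ x in s ∩ Set.Icc (0:ℝ) ε, (gnn x : ENNReal) ∂volume
        = ENNReal.ofReal (∫ x in s ∩ Set.Icc (0:ℝ) ε, c * x ^ (-γ)) := by
          rw [ofReal_integral_eq_lintegral_ofReal (hden_int.mono_set hsub) hnn]; rfl
      _ ≤ Λ (s ∩ Set.Icc 0 ε) := hΛ _ hms hsub
  have hE : ∫ x, f x ∂μ ≤ ∫ x in Set.Icc (0:ℝ) ε, f x ∂Λ :=
    integral_mono_measure hμΛ (hfnn _ hsubIcc measurableSet_Icc) (hfint1.mono_set hsubIcc)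
  have hF : ∫ x, f x ∂μ = ∫ x in Set.Icc (0:ℝ) ε, (c * x ^ (-γ)) * f x ∂volume := by
    rw [hμ, integral_withDensity_eq_integral_smul hgmeas]
    refine integral_congr_ae ((ae_restrict_iff' measurableSet_Icc).mpr (ae_of_all _ fun x hx => ?_))
    have : (0:ℝ) ≤ c * x ^ (-γ) := mul_nonneg hc.le (Real.rpow_nonneg hx.1 _)
    simp [hgnn, NNReal.smul_def, Real.coe_toNNReal _ this]
  have hG : ∫ x in Set.Icc (0:ℝ) ε, (c * x ^ (-γ)) * f x ∂volume
      = c * ∫ x in (0:ℝ)..ε, x ^ (-γ) * (1-x) ^ m := by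
    rw [integral_Icc_eq_integral_Ioc, ← intervalIntegral.integral_of_le h0.le,
      ← intervalIntegral.integral_const_mul]
    refine intervalIntegral.integral_congr fun x _ => by simp [hf]; ring
  rw [hB, ← hG, ← hF]
  exact hE.trans hCε

/-- Under the (c,ε,γ)-property, λ_n ≥ C(n,2) c ε^{1-γ} B(1-γ, n-1), i.e.
λ_n ≥ (c ε^{1-γ} n / 2) · (n−1)! Γ(1−γ)/Γ(n−γ), for all n ≥ 2. -/
theorem totalRate_ge_beta_bound (Λ : Measure ℝ) [IsFiniteMeasure Λ]
    (c ε γ : ℝ) (hc : 0 < c) (hε : ε ∈ Set.Ioo (0 : ℝ) 1) (hγ : γ ∈ Set.Ioo (0 : ℝ) 1)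
    (hΛ : ∀ s : Set ℝ, MeasurableSet s → s ⊆ Set.Icc 0 ε →
      ENNReal.ofReal (∫ x in s, c * x ^ (-γ)) ≤ Λ s) :
    ∀ n : ℕ, 2 ≤ n →
      ((n.choose 2 : ℝ) * (c * ε ^ (1 - γ)) *
          (Real.Gamma (1 - γ) * Real.Gamma ((n : ℝ) - 1) / Real.Gamma ((n : ℝ) - γ))
        ≤ totalRate Λ n) ∧
      (c * ε ^ (1 - γ) * (n : ℝ) / 2 *
          (((n - 1).factorial : ℝ) * Real.Gamma (1 - γ) / Real.Gamma ((n : ℝ) - γ))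
        ≤ totalRate Λ n) := by
  intro n hn
  obtain ⟨k, rfl⟩ : ∃ k, n = k + 2 := ⟨n - 2, by omega⟩
  set n := k + 2
  -- the single term k=2 bounds the total rate
  have hA : (n.choose 2 : ℝ) * coalRate Λ n 2 ≤ totalRate Λ n := by
    refine Finset.single_le_sum (f := fun j => (n.choose j : ℝ) * coalRate Λ n j)
      (fun j _ => mul_nonneg (Nat.cast_nonneg _) ?_) (Finset.mem_Icc.mpr ⟨le_refl 2, hn⟩)
    refine setIntegral_nonneg measurableSet_Icc fun x hx => ?_
    exact mul_nonneg (pow_nonneg hx.1 _) (pow_nonneg (by linarith [hx.2]) _)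
  -- Beta identity
  have hBeta : Real.Gamma (1 - γ) * Real.Gamma ((n : ℝ) - 1) / Real.Gamma ((n : ℝ) - γ)
      = ∫ y in (0:ℝ)..1, y ^ (-γ) * (1-y) ^ (n - 2) := by
    have h := realBeta (a := 1 - γ) (b := (n : ℝ) - 1)
      (by linarith [hγ.2]) (by push_cast [n]; linarith)
    rw [show (1 - γ) + ((n:ℝ) - 1) = (n:ℝ) - γ by ring] at h
    rw [← h]
    refine intervalIntegral.integral_congr fun y hy => ?_
    rw [Set.uIcc_of_le (by norm_num : (0:ℝ) ≤ 1)] at hy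
    have h1 : (1 - γ) - 1 = -γ := by ring
    have h2 : ((n:ℝ) - 1) - 1 = ((n - 2 : ℕ) : ℝ) := by push_cast [n]; ring
    rw [h1, h2, Real.rpow_natCast]
  have hcore := coalRate_lb Λ c ε γ hc hε.1 hε.2 hγ hΛ n
  have hsub := subst_bound hε.1 hε.2 hγ.2 (n - 2)
  have hmain : (n.choose 2 : ℝ) * (c * ε ^ (1 - γ)) *
      (Real.Gamma (1 - γ) * Real.Gamma ((n : ℝ) - 1) / Real.Gamma ((n : ℝ) - γ))
      ≤ totalRate Λ n := by
    refine le_trans ?_ hA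
    rw [hBeta]
    calc (n.choose 2 : ℝ) * (c * ε ^ (1 - γ)) * ∫ y in (0:ℝ)..1, y ^ (-γ) * (1-y) ^ (n - 2)
        = (n.choose 2 : ℝ) * (c * (ε ^ (1 - γ) * ∫ y in (0:ℝ)..1, y ^ (-γ) * (1-y) ^ (n - 2))) :=
          by ring
      _ ≤ (n.choose 2 : ℝ) * (c * ∫ x in (0:ℝ)..ε, x ^ (-γ) * (1-x) ^ (n - 2)) := by
          refine mul_le_mul_of_nonneg_left ?_ (Nat.cast_nonneg _)
          exact mul_le_mul_of_nonneg_left hsub hc.le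
      _ ≤ (n.choose 2 : ℝ) * coalRate Λ n 2 :=
          mul_le_mul_of_nonneg_left hcore (Nat.cast_nonneg _)
  refine ⟨hmain, ?_⟩
  refine le_trans (le_of_eq ?_) hmain
  have h1 : ((n : ℝ) - 1) = ((k : ℝ) + 1) := by push_cast [n]; ring
  have h2 : Real.Gamma ((n:ℝ) - 1) = (k.factorial : ℝ) := by
    rw [h1, Real.Gamma_nat_eq_factorial]
  have h3 : ((n - 1).factorial : ℝ) = ((k:ℝ) + 1) * (k.factorial : ℝ) := by
    have : n - 1 = k + 1 := by omega
    rw [this, Nat.factorial_succ]; push_cast; ring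
  rw [h2, h3, Nat.cast_choose_two]
  push_cast [n]
  ring
end

section
/- For γ ∈ (0,1) and n ≥ 2, the product B = Π_{l=2}^{n−1} l/(l−γ) satisfies ln B ≥ γ ln((n−γ)/(2−γ)) − γ²/(2(1−γ)), hence B ≥ ((n−γ)/(2−γ))^γ e^{−γ²/(2(1−γ))}. -/
lemma aux_harmonic_log (n : ℕ) (hn : 2 ≤ n) :
    Real.log n - Real.log 2 ≤ ∑ l ∈ Finset.Icc 2 (n - 1), 1 / (l : ℝ) := by
  induction n, hn using Nat.le_induction with
  | base => simp
  | succ m hm ih =>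
    have hm2 : (2 : ℝ) ≤ (m : ℝ) := by exact_mod_cast hm
    have hm0 : (0 : ℝ) < (m : ℝ) := by linarith
    have hrw : m + 1 - 1 = (m - 1) + 1 := by omega
    have hrw2 : (m - 1) + 1 = m := by omega
    rw [hrw, Finset.sum_Icc_succ_top (by omega : 2 ≤ (m - 1) + 1), hrw2]
    have hlog : Real.log (((m : ℝ) + 1) / m) ≤ ((m : ℝ) + 1) / m - 1 :=
      Real.log_le_sub_one_of_pos (by positivity)
    have hdiv : Real.log (((m : ℝ) + 1) / m) = Real.log ((m : ℝ) + 1) - Real.log m :=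
      Real.log_div (by linarith) (by linarith)
    have h1 : ((m : ℝ) + 1) / m - 1 = 1 / m := by field_simp; ring
    have hcast : ((m + 1 : ℕ) : ℝ) = (m : ℝ) + 1 := by push_cast; ring
    rw [hcast]
    rw [hdiv, h1] at hlog
    linarith

/-- For γ ∈ (0,1) and n ≥ 2, the product B = Π_{l=2}^{n−1} l/(l−γ) satisfies
ln B ≥ γ ln((n−γ)/(2−γ)) − γ²/(2(1−γ)), hence
B ≥ ((n−γ)/(2−γ))^γ exp(−γ²/(2(1−γ))). -/
theorem log_prod_lower_bound (γ : ℝ) (hγ : γ ∈ Set.Ioo (0 : ℝ) 1) (n : ℕ) (hn : 2 ≤ n) :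
    (γ * Real.log (((n : ℝ) - γ) / (2 - γ)) - γ ^ 2 / (2 * (1 - γ))
        ≤ Real.log (∏ l ∈ Finset.Icc 2 (n - 1), (l : ℝ) / ((l : ℝ) - γ))) ∧
      ((((n : ℝ) - γ) / (2 - γ)) ^ γ * Real.exp (-γ ^ 2 / (2 * (1 - γ)))
        ≤ ∏ l ∈ Finset.Icc 2 (n - 1), (l : ℝ) / ((l : ℝ) - γ)) := by
  obtain ⟨hγ0, hγ1⟩ := hγ
  have hn2 : (2 : ℝ) ≤ (n : ℝ) := by exact_mod_cast hn
  have hterm_pos : ∀ l ∈ Finset.Icc 2 (n - 1), (0 : ℝ) < (l : ℝ) / ((l : ℝ) - γ) := by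
    intro l hl
    have hl2 : 2 ≤ l := (Finset.mem_Icc.mp hl).1
    have hl2' : (2 : ℝ) ≤ (l : ℝ) := by exact_mod_cast hl2
    have : (0 : ℝ) < (l : ℝ) - γ := by linarith
    positivity
  have hBpos : 0 < ∏ l ∈ Finset.Icc 2 (n - 1), (l : ℝ) / ((l : ℝ) - γ) :=
    Finset.prod_pos hterm_pos
  have hlogB : Real.log (∏ l ∈ Finset.Icc 2 (n - 1), (l : ℝ) / ((l : ℝ) - γ))
      = ∑ l ∈ Finset.Icc 2 (n - 1), Real.log ((l : ℝ) / ((l : ℝ) - γ)) :=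
    Real.log_prod (fun l hl => (hterm_pos l hl).ne')
  -- termwise bound: γ / l ≤ log (l / (l - γ))
  have hterm : ∀ l ∈ Finset.Icc 2 (n - 1), γ * (1 / (l : ℝ)) ≤ Real.log ((l : ℝ) / ((l : ℝ) - γ)) := by
    intro l hl
    have hl2 : 2 ≤ l := (Finset.mem_Icc.mp hl).1
    have hl2' : (2 : ℝ) ≤ (l : ℝ) := by exact_mod_cast hl2
    have hlγ : (0 : ℝ) < (l : ℝ) - γ := by linarith
    have hl0 : (0 : ℝ) < (l : ℝ) := by linarith
    have h1 : Real.log (((l : ℝ) - γ) / l) ≤ ((l : ℝ) - γ) / l - 1 :=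
      Real.log_le_sub_one_of_pos (by positivity)
    have h2 : Real.log (((l : ℝ) - γ) / l) = - Real.log ((l : ℝ) / ((l : ℝ) - γ)) := by
      rw [Real.log_div hlγ.ne' hl0.ne', Real.log_div hl0.ne' hlγ.ne']; ring
    have h3 : ((l : ℝ) - γ) / l - 1 = -(γ * (1 / l)) := by field_simp; ring
    rw [h2, h3] at h1
    linarith
  have hsum : ∑ l ∈ Finset.Icc 2 (n - 1), γ * (1 / (l : ℝ))
      ≤ Real.log (∏ l ∈ Finset.Icc 2 (n - 1), (l : ℝ) / ((l : ℝ) - γ)) := by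
    rw [hlogB]; exact Finset.sum_le_sum hterm
  have hsum' : γ * (Real.log n - Real.log 2)
      ≤ Real.log (∏ l ∈ Finset.Icc 2 (n - 1), (l : ℝ) / ((l : ℝ) - γ)) := by
    have := aux_harmonic_log n hn
    calc γ * (Real.log n - Real.log 2)
        ≤ γ * ∑ l ∈ Finset.Icc 2 (n - 1), 1 / (l : ℝ) := by
          exact mul_le_mul_of_nonneg_left this hγ0.le
      _ = ∑ l ∈ Finset.Icc 2 (n - 1), γ * (1 / (l : ℝ)) := by rw [Finset.mul_sum]
      _ ≤ _ := hsum
  -- algebraic comparison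
  have h2γ : (0 : ℝ) < 2 - γ := by linarith
  have hnγ : (0 : ℝ) < (n : ℝ) - γ := by linarith
  have hn0 : (0 : ℝ) < (n : ℝ) := by linarith
  set t : ℝ := (2 * ((n : ℝ) - γ)) / ((n : ℝ) * (2 - γ)) with ht_def
  have ht_pos : 0 < t := by positivity
  have hlt : Real.log t ≤ t - 1 := Real.log_le_sub_one_of_pos ht_pos
  have ht1 : t - 1 = γ * ((n : ℝ) - 2) / ((n : ℝ) * (2 - γ)) := by
    rw [ht_def]; field_simp; ring
  have hbound : t - 1 ≤ γ / (2 * (1 - γ)) := by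
    rw [ht1, div_le_div_iff₀ (by positivity) (by nlinarith)]
    nlinarith [mul_pos hγ0 hn0, mul_nonneg hγ0.le (sub_nonneg.mpr hn2)]
  have hlogt : Real.log t = Real.log (((n : ℝ) - γ) / (2 - γ)) - (Real.log n - Real.log 2) := by
    rw [ht_def, Real.log_div (by positivity) (by positivity),
      Real.log_div hnγ.ne' h2γ.ne', Real.log_mul (by norm_num) hnγ.ne',
      Real.log_mul hn0.ne' h2γ.ne']
    ring
  have hmain : γ * Real.log (((n : ℝ) - γ) / (2 - γ)) - γ ^ 2 / (2 * (1 - γ))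
      ≤ γ * (Real.log n - Real.log 2) := by
    have h4 : Real.log (((n : ℝ) - γ) / (2 - γ)) - (Real.log n - Real.log 2)
        ≤ γ / (2 * (1 - γ)) := by rw [← hlogt]; linarith
    have h5 : γ * (Real.log (((n : ℝ) - γ) / (2 - γ)) - (Real.log n - Real.log 2))
        ≤ γ * (γ / (2 * (1 - γ))) := mul_le_mul_of_nonneg_left h4 hγ0.le
    have h6 : γ * (γ / (2 * (1 - γ))) = γ ^ 2 / (2 * (1 - γ)) := by ring
    nlinarith [h5]
  have hfirst : γ * Real.log (((n : ℝ) - γ) / (2 - γ)) - γ ^ 2 / (2 * (1 - γ))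
      ≤ Real.log (∏ l ∈ Finset.Icc 2 (n - 1), (l : ℝ) / ((l : ℝ) - γ)) := by
    linarith
  refine ⟨hfirst, ?_⟩
  have hr_pos : (0 : ℝ) < ((n : ℝ) - γ) / (2 - γ) := by positivity
  have hrpow : (((n : ℝ) - γ) / (2 - γ)) ^ γ * Real.exp (-γ ^ 2 / (2 * (1 - γ)))
      = Real.exp (γ * Real.log (((n : ℝ) - γ) / (2 - γ)) - γ ^ 2 / (2 * (1 - γ))) := by
    rw [Real.rpow_def_of_pos hr_pos, ← Real.exp_add]
    ring_nf
  rw [hrpow]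
  calc Real.exp (γ * Real.log (((n : ℝ) - γ) / (2 - γ)) - γ ^ 2 / (2 * (1 - γ)))
      ≤ Real.exp (Real.log (∏ l ∈ Finset.Icc 2 (n - 1), (l : ℝ) / ((l : ℝ) - γ))) :=
        Real.exp_le_exp.mpr hfirst
    _ = _ := Real.exp_log hBpos
end
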